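/- arXiv:1309.1659 — 3 statements merged into one kernel-verified Lean document; each statement's English description precedes it below -/
import Mathlib

section
/- Let π : H → B be a partial representation of a Hopf algebra H on a unital algebra B. Then for all h ∈ H: π(S(h₍₁₎))π(h₍₂₎)π(S(h₍₃₎)) = π(S(h)) and π(h₍₁₎)π(S(h₍₂₎))π(h₍₃₎) = π(h) (using Sweedler notation for the comultiplication). -/
open TensorProduct BigOperators HopfAlgebra

section Aux

variable {k : Type} [CommRing k] {H : Type} [Ring H] [HopfAlgebra k H]
    {B : Type} [Ring B] [Algebra k B]

/-- Coassociativity for explicit Sweedler decompositions. -/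
lemma partialRep_coassoc_aux (h : H) (n : ℕ) (h1 h2 : Fin n → H)
    (hc : Coalgebra.comul (R := k) h = ∑ i, h1 i ⊗ₜ[k] h2 i)
    (m : Fin n → ℕ) (c d : (i : Fin n) → Fin (m i) → H)
    (hcd : ∀ i, Coalgebra.comul (R := k) (h1 i) = ∑ j, c i j ⊗ₜ[k] d i j) :
    ∑ i, ∑ j, c i j ⊗ₜ[k] (d i j ⊗ₜ[k] h2 i)
      = ∑ i, h1 i ⊗ₜ[k] (Coalgebra.comul (R := k) (h2 i)) := by
  have h0 := Coalgebra.coassoc_apply (R := k) h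
  have e1 : (LinearMap.rTensor H (Coalgebra.comul (R := k))) (Coalgebra.comul (R := k) h)
      = ∑ i, (∑ j, c i j ⊗ₜ[k] d i j) ⊗ₜ[k] h2 i := by
    rw [hc, map_sum]
    exact Finset.sum_congr rfl fun i _ => by rw [LinearMap.rTensor_tmul, hcd i]
  have e2 : (LinearMap.lTensor H (Coalgebra.comul (R := k))) (Coalgebra.comul (R := k) h)
      = ∑ i, h1 i ⊗ₜ[k] Coalgebra.comul (R := k) (h2 i) := by
    rw [hc, map_sum]; simp [LinearMap.lTensor_tmul]
  rw [e1, e2] at h0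
  rw [← h0, map_sum]
  refine Finset.sum_congr rfl fun i _ => ?_
  rw [TensorProduct.sum_tmul, map_sum]
  exact Finset.sum_congr rfl fun j _ => TensorProduct.assoc_tmul ..

/-- Counit law for explicit Sweedler decompositions. -/
lemma partialRep_counit_aux (h : H) (n : ℕ) (h1 h2 : Fin n → H)
    (hc : Coalgebra.comul (R := k) h = ∑ i, h1 i ⊗ₜ[k] h2 i) :
    ∑ i, Coalgebra.counit (R := k) (h2 i) • h1 i = h := by
  have h0 := Coalgebra.lTensor_counit_comul (R := k) h
  rw [hc, map_sum] at h0
  simpa [map_sum] using congrArg (TensorProduct.rid k H) h0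

end Aux

variable (k : Type) [CommRing k]

/-- A partial representation of a Hopf algebra `H` on an algebra `B` (axioms (PR1)-(PR5)),
stated using arbitrary finite Sweedler decompositions of the comultiplication. -/
def IsPartialRep {H : Type} [Ring H] [HopfAlgebra k H]
    {B : Type} [Ring B] [Algebra k B] (π : H →ₗ[k] B) : Prop :=
  -- (PR1)
  π 1 = 1 ∧
  -- (PR2) : π(h)π(x₍₁₎)π(S(x₍₂₎)) = π(h x₍₁₎)π(S(x₍₂₎))
  (∀ (h x : H) (n : ℕ) (x1 x2 : Fin n → H),
    Coalgebra.comul (R := k) x = ∑ i, x1 i ⊗ₜ[k] x2 i →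
    π h * ∑ i, π (x1 i) * π (antipode (R := k) (x2 i)) =
      ∑ i, π (h * x1 i) * π (antipode (R := k) (x2 i))) ∧
  -- (PR3) : π(h₍₁₎)π(S(h₍₂₎))π(x) = π(h₍₁₎)π(S(h₍₂₎) x)
  (∀ (h x : H) (n : ℕ) (h1 h2 : Fin n → H),
    Coalgebra.comul (R := k) h = ∑ i, h1 i ⊗ₜ[k] h2 i →
    (∑ i, π (h1 i) * π (antipode (R := k) (h2 i))) * π x =
      ∑ i, π (h1 i) * π (antipode (R := k) (h2 i) * x)) ∧
  -- (PR4) : π(h)π(S(x₍₁₎))π(x₍₂₎) = π(h S(x₍₁₎))π(x₍₂₎)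
  (∀ (h x : H) (n : ℕ) (x1 x2 : Fin n → H),
    Coalgebra.comul (R := k) x = ∑ i, x1 i ⊗ₜ[k] x2 i →
    π h * ∑ i, π (antipode (R := k) (x1 i)) * π (x2 i) =
      ∑ i, π (h * antipode (R := k) (x1 i)) * π (x2 i)) ∧
  -- (PR5) : π(S(h₍₁₎))π(h₍₂₎)π(x) = π(S(h₍₁₎))π(h₍₂₎ x)
  (∀ (h x : H) (n : ℕ) (h1 h2 : Fin n → H),
    Coalgebra.comul (R := k) h = ∑ i, h1 i ⊗ₜ[k] h2 i →
    (∑ i, π (antipode (R := k) (h1 i)) * π (h2 i)) * π x =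
      ∑ i, π (antipode (R := k) (h1 i)) * π (h2 i * x))

variable {k}

/-- For any partial representation `π : H → B` of a Hopf algebra and any
Sweedler decompositions `Δ(h) = ∑ᵢ h1 i ⊗ h2 i`, `Δ(h1 i) = ∑ⱼ c i j ⊗ d i j`
(so that `h₍₁₎ ⊗ h₍₂₎ ⊗ h₍₃₎ = ∑ c i j ⊗ d i j ⊗ h2 i`), one has
`π(S(h₍₁₎))π(h₍₂₎)π(S(h₍₃₎)) = π(S(h))` and `π(h₍₁₎)π(S(h₍₂₎))π(h₍₃₎) = π(h)`. -/
theorem partialRep_key_identities {H : Type} [Ring H] [HopfAlgebra k H]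
    {B : Type} [Ring B] [Algebra k B] (π : H →ₗ[k] B) (hπ : IsPartialRep k π) :
    ∀ (h : H) (n : ℕ) (h1 h2 : Fin n → H),
      Coalgebra.comul (R := k) h = ∑ i, h1 i ⊗ₜ[k] h2 i →
      ∀ (m : Fin n → ℕ) (c d : (i : Fin n) → Fin (m i) → H),
        (∀ i, Coalgebra.comul (R := k) (h1 i) = ∑ j, c i j ⊗ₜ[k] d i j) →
        (∑ i, ∑ j, π (HopfAlgebra.antipode (R := k) (c i j)) * π (d i j) *
            π (HopfAlgebra.antipode (R := k) (h2 i)) = π (HopfAlgebra.antipode (R := k) h)) ∧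
        (∑ i, ∑ j, π (c i j) * π (HopfAlgebra.antipode (R := k) (d i j)) * π (h2 i) = π h) := by
  obtain ⟨hPR1, _hPR2, hPR3, _hPR4, hPR5⟩ := hπ
  intro h n h1 h2 hc m c d hcd
  have key := partialRep_coassoc_aux h n h1 h2 hc m c d hcd
  have hcounit := partialRep_counit_aux h n h1 h2 hc
  have hπalg : ∀ r : k, π (algebraMap k H r) = r • (1 : B) := by
    intro r
    rw [Algebra.algebraMap_eq_smul_one, map_smul, hPR1]
  constructor
  · -- π(S h₁) π(h₂) π(S h₃) = π(S h)
    set L1 : H ⊗[k] (H ⊗[k] H) →ₗ[k] B :=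
      (LinearMap.mul' k B) ∘ₗ TensorProduct.map (π ∘ₗ antipode (R := k))
        (π ∘ₗ (LinearMap.mul' k H) ∘ₗ LinearMap.lTensor H (antipode (R := k))) with hL1
    have hL1app : ∀ x y z : H,
        L1 (x ⊗ₜ[k] (y ⊗ₜ[k] z)) = π (antipode (R := k) x) * π (y * antipode (R := k) z) := by
      intro x y z; simp [hL1]
    calc ∑ i, ∑ j, π (antipode (R := k) (c i j)) * π (d i j) * π (antipode (R := k) (h2 i))
        = ∑ i, (∑ j, π (antipode (R := k) (c i j)) * π (d i j)) * π (antipode (R := k) (h2 i)) := by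
          simp [Finset.sum_mul]
      _ = ∑ i, ∑ j, π (antipode (R := k) (c i j)) * π (d i j * antipode (R := k) (h2 i)) :=
          Finset.sum_congr rfl fun i _ =>
            hPR5 (h1 i) (antipode (R := k) (h2 i)) (m i) (c i) (d i) (hcd i)
      _ = L1 (∑ i, ∑ j, c i j ⊗ₜ[k] (d i j ⊗ₜ[k] h2 i)) := by
          rw [map_sum]
          refine Finset.sum_congr rfl fun i _ => ?_
          rw [map_sum]
          exact Finset.sum_congr rfl fun j _ => (hL1app ..).symm
      _ = ∑ i, Coalgebra.counit (R := k) (h2 i) • π (antipode (R := k) (h1 i)) := by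
          rw [key, map_sum]
          refine Finset.sum_congr rfl fun i _ => ?_
          simp only [hL1, LinearMap.comp_apply, TensorProduct.map_tmul]
          rw [mul_antipode_lTensor_comul_apply, hπalg]
          simp [mul_smul_comm]
      _ = π (antipode (R := k) h) := by
          rw [← hcounit]; simp [map_sum]
  · -- π(h₁) π(S h₂) π(h₃) = π h
    set L2 : H ⊗[k] (H ⊗[k] H) →ₗ[k] B :=
      (LinearMap.mul' k B) ∘ₗ TensorProduct.map π
        (π ∘ₗ (LinearMap.mul' k H) ∘ₗ LinearMap.rTensor H (antipode (R := k))) with hL2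
    have hL2app : ∀ x y z : H,
        L2 (x ⊗ₜ[k] (y ⊗ₜ[k] z)) = π x * π (antipode (R := k) y * z) := by
      intro x y z; simp [hL2]
    calc ∑ i, ∑ j, π (c i j) * π (antipode (R := k) (d i j)) * π (h2 i)
        = ∑ i, (∑ j, π (c i j) * π (antipode (R := k) (d i j))) * π (h2 i) := by
          simp [Finset.sum_mul]
      _ = ∑ i, ∑ j, π (c i j) * π (antipode (R := k) (d i j) * h2 i) :=
          Finset.sum_congr rfl fun i _ => hPR3 (h1 i) (h2 i) (m i) (c i) (d i) (hcd i)
      _ = L2 (∑ i, ∑ j, c i j ⊗ₜ[k] (d i j ⊗ₜ[k] h2 i)) := by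
          rw [map_sum]
          refine Finset.sum_congr rfl fun i _ => ?_
          rw [map_sum]
          exact Finset.sum_congr rfl fun j _ => (hL2app ..).symm
      _ = ∑ i, Coalgebra.counit (R := k) (h2 i) • π (h1 i) := by
          rw [key, map_sum]
          refine Finset.sum_congr rfl fun i _ => ?_
          simp only [hL2, LinearMap.comp_apply, TensorProduct.map_tmul]
          rw [mul_antipode_rTensor_comul_apply, hπalg]
          simp [mul_smul_comm]
      _ = π h := by rw [← hcounit]; simp [map_sum]
end

section
/- Let π : H → B be a partial representation of a Hopf algebra H on a unital algebra B. If π satisfies π(S(h₍₁₎))π(h₍₂₎) = ε(h)1_B for all h ∈ H, then π is an algebra morphism, i.e. π(h)π(k) = π(hk) for all h,k ∈ H. -/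
open TensorProduct BigOperators HopfAlgebra

variable (k : Type) [CommRing k]

variable {k}

/-- Every element of a tensor product is a finite (Fin-indexed) sum of pure tensors. -/
lemma exists_fin_tmul {R M N : Type*} [CommSemiring R] [AddCommMonoid M] [AddCommMonoid N]
    [Module R M] [Module R N] (t : M ⊗[R] N) :
    ∃ (n : ℕ) (f : Fin n → M) (g : Fin n → N), t = ∑ i, f i ⊗ₜ[R] g i := by
  induction t with
  | zero => exact ⟨0, ![], ![], by simp⟩
  | tmul x y => exact ⟨1, ![x], ![y], by simp⟩
  | add x y hx hy =>
    obtain ⟨n, f, g, rfl⟩ := hx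
    obtain ⟨m, f', g', rfl⟩ := hy
    refine ⟨n + m, Fin.append f f', Fin.append g g', ?_⟩
    rw [Fin.sum_univ_add]
    simp [Fin.append_left, Fin.append_right]

/-- If a partial representation `π : H → B` satisfies
`π(S(h₍₁₎))π(h₍₂₎) = ε(h)·1` for all `h`, then `π` is multiplicative, i.e. an algebra
morphism. -/
theorem partialRep_is_algebra_morphism_of_antipode_counit {H : Type} [Ring H]
    [HopfAlgebra k H] {B : Type} [Ring B] [Algebra k B]
    (π : H →ₗ[k] B) (hπ : IsPartialRep k π)
    (hcond : ∀ (h : H) (n : ℕ) (h1 h2 : Fin n → H),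
      Coalgebra.comul (R := k) h = ∑ i, h1 i ⊗ₜ[k] h2 i →
      ∑ i, π (HopfAlgebra.antipode (R := k) (h1 i)) * π (h2 i) =
        algebraMap k B (Coalgebra.counit (R := k) h)) :
    ∀ h x : H, π h * π x = π (h * x) := by
  intro h x
  obtain ⟨n, u, v, hx⟩ := exists_fin_tmul (Coalgebra.comul (R := k) x)
  choose m a b hab using fun i : Fin n => exists_fin_tmul (Coalgebra.comul (R := k) (v i))
  choose p c d hcd using fun i : Fin n => exists_fin_tmul (Coalgebra.comul (R := k) (u i))
  -- counit identities
  have hxr : x = ∑ i, Coalgebra.counit (R := k) (v i) • u i := by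
    have h1 := Coalgebra.lTensor_counit_comul (R := k) x
    rw [hx, map_sum] at h1
    have h2 := congrArg (TensorProduct.rid k H) h1
    simp only [map_sum, LinearMap.lTensor_tmul, TensorProduct.rid_tmul, one_smul] at h2
    exact h2.symm
  have hxl : x = ∑ i, Coalgebra.counit (R := k) (u i) • v i := by
    have h1 := Coalgebra.rTensor_counit_comul (R := k) x
    rw [hx, map_sum] at h1
    have h2 := congrArg (TensorProduct.lid k H) h1
    simp only [map_sum, LinearMap.rTensor_tmul, TensorProduct.lid_tmul, one_smul] at h2
    exact h2.symm
  -- Step A : π(h x) = ∑ᵢⱼ π(h uᵢ S(aᵢⱼ)) π(bᵢⱼ)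
  have stepA : π (h * x) =
      ∑ i, ∑ j, π (h * u i * antipode (R := k) (a i j)) * π (b i j) := by
    calc π (h * x) = ∑ i, Coalgebra.counit (R := k) (v i) • π (h * u i) := by
          conv_lhs => rw [hxr]
          rw [Finset.mul_sum, map_sum]
          exact Finset.sum_congr rfl fun i _ => by rw [mul_smul_comm, map_smul]
      _ = ∑ i, π (h * u i) * algebraMap k B (Coalgebra.counit (R := k) (v i)) := by
          refine Finset.sum_congr rfl fun i _ => ?_
          rw [Algebra.smul_def, ← Algebra.commutes]
      _ = ∑ i, π (h * u i) * ∑ j, π (antipode (R := k) (a i j)) * π (b i j) := by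
          refine Finset.sum_congr rfl fun i _ => ?_
          rw [hcond (v i) (m i) (a i) (b i) (hab i)]
      _ = ∑ i, ∑ j, π (h * u i * antipode (R := k) (a i j)) * π (b i j) :=
          Finset.sum_congr rfl fun i _ =>
            hπ.2.2.2.1 (h * u i) (v i) (m i) (a i) (b i) (hab i)
  -- The auxiliary linear map Φ on the triple tensor product
  set Φ₀ : H ⊗[k] H →ₗ[k] B :=
    π ∘ₗ (LinearMap.mulLeft k h) ∘ₗ (LinearMap.mul' k H) ∘ₗ
      (LinearMap.lTensor H (antipode (R := k))) with hΦ₀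
  set Φ : (H ⊗[k] H) ⊗[k] H →ₗ[k] B :=
    (LinearMap.mul' k B) ∘ₗ TensorProduct.map Φ₀ π with hΦdef
  have hΦ : ∀ w g e : H, Φ ((w ⊗ₜ[k] g) ⊗ₜ[k] e) =
      π (h * (w * antipode (R := k) g)) * π e := by
    intro w g e
    simp [hΦdef, hΦ₀, LinearMap.mul'_apply]
  have key : Φ (LinearMap.rTensor H (Coalgebra.comul (R := k)) (Coalgebra.comul (R := k) x)) =
      Φ ((TensorProduct.assoc k H H H).symm
        (LinearMap.lTensor H (Coalgebra.comul (R := k)) (Coalgebra.comul (R := k) x))) := by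
    rw [Coalgebra.coassoc_symm_apply]
  have lhs_eq : Φ (LinearMap.rTensor H (Coalgebra.comul (R := k)) (Coalgebra.comul (R := k) x)) =
      ∑ i, ∑ j, π (h * (c i j * antipode (R := k) (d i j))) * π (v i) := by
    rw [hx, map_sum, map_sum]
    refine Finset.sum_congr rfl fun i _ => ?_
    rw [LinearMap.rTensor_tmul, hcd i, TensorProduct.sum_tmul, map_sum]
    exact Finset.sum_congr rfl fun j _ => hΦ _ _ _
  have rhs_eq : Φ ((TensorProduct.assoc k H H H).symm
        (LinearMap.lTensor H (Coalgebra.comul (R := k)) (Coalgebra.comul (R := k) x))) =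
      ∑ i, ∑ j, π (h * (u i * antipode (R := k) (a i j))) * π (b i j) := by
    rw [hx, map_sum, map_sum, map_sum]
    refine Finset.sum_congr rfl fun i _ => ?_
    rw [LinearMap.lTensor_tmul, hab i, TensorProduct.tmul_sum, map_sum, map_sum]
    refine Finset.sum_congr rfl fun j _ => ?_
    rw [TensorProduct.assoc_symm_tmul]
    exact hΦ _ _ _
  -- collapse the left-hand side using the antipode axiom
  have coll : ∀ i : Fin n,
      ∑ j, π (h * (c i j * antipode (R := k) (d i j))) * π (v i) =
        Coalgebra.counit (R := k) (u i) • (π h * π (v i)) := by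
    intro i
    have h1 : ∑ j, c i j * antipode (R := k) (d i j) =
        algebraMap k H (Coalgebra.counit (R := k) (u i)) := by
      have h2 := HopfAlgebra.mul_antipode_lTensor_comul_apply (R := k) (u i)
      rw [hcd i, map_sum, map_sum] at h2
      simpa [LinearMap.lTensor_tmul, LinearMap.mul'_apply] using h2
    calc ∑ j, π (h * (c i j * antipode (R := k) (d i j))) * π (v i)
        = π (h * ∑ j, c i j * antipode (R := k) (d i j)) * π (v i) := by
          rw [Finset.mul_sum, map_sum, Finset.sum_mul]
      _ = Coalgebra.counit (R := k) (u i) • (π h * π (v i)) := by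
          rw [h1, ← Algebra.commutes, ← Algebra.smul_def, map_smul, smul_mul_assoc]
  calc π h * π x = ∑ i, Coalgebra.counit (R := k) (u i) • (π h * π (v i)) := by
        conv_lhs => rw [hxl]
        rw [map_sum, Finset.mul_sum]
        exact Finset.sum_congr rfl fun i _ => by rw [map_smul, mul_smul_comm]
    _ = ∑ i, ∑ j, π (h * (c i j * antipode (R := k) (d i j))) * π (v i) :=
        (Finset.sum_congr rfl fun i _ => coll i).symm
    _ = ∑ i, ∑ j, π (h * (u i * antipode (R := k) (a i j))) * π (b i j) := by
        rw [← lhs_eq, key, rhs_eq]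
    _ = π (h * x) := by rw [stepA]; simp [mul_assoc]
end

section
/- Let A be a symmetric partial left H-module algebra over a Hopf algebra H. Then the map π : H → End_k(A) defined by π(h)(a) = h·a is a partial representation of H on End_k(A). -/
open TensorProduct BigOperators HopfAlgebra

variable (k : Type) [CommRing k]

/-- A symmetric partial action of a Hopf algebra `H` on an algebra `A` (axioms (PA1)-(PA4)),
stated via arbitrary finite Sweedler decompositions. -/
def IsSymmetricPartialAction {k : Type} [CommRing k] {H : Type} [Ring H] [HopfAlgebra k H]
    {A : Type} [Ring A] [Algebra k A] (act : H →ₗ[k] Module.End k A) : Prop :=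
  -- (PA1)
  (∀ a : A, act 1 a = a) ∧
  -- (PA2) : h·(ab) = (h₍₁₎·a)(h₍₂₎·b)
  (∀ (h : H) (a b : A) (n : ℕ) (h1 h2 : Fin n → H),
    Coalgebra.comul (R := k) h = ∑ i, h1 i ⊗ₜ[k] h2 i →
    act h (a * b) = ∑ i, act (h1 i) a * act (h2 i) b) ∧
  -- (PA3) : h·(x·a) = (h₍₁₎·1)(h₍₂₎x·a)
  (∀ (h x : H) (a : A) (n : ℕ) (h1 h2 : Fin n → H),
    Coalgebra.comul (R := k) h = ∑ i, h1 i ⊗ₜ[k] h2 i →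
    act h (act x a) = ∑ i, act (h1 i) 1 * act (h2 i * x) a) ∧
  -- (PA4) : h·(x·a) = (h₍₁₎x·a)(h₍₂₎·1)
  (∀ (h x : H) (a : A) (n : ℕ) (h1 h2 : Fin n → H),
    Coalgebra.comul (R := k) h = ∑ i, h1 i ⊗ₜ[k] h2 i →
    act h (act x a) = ∑ i, act (h1 i * x) a * act (h2 i) 1)

variable {k}



namespace PartialRepTools

variable {k : Type} [CommRing k] {H : Type} [Ring H] [HopfAlgebra k H]

/-- Build a linear map from a function with additivity and smul proofs. -/
def lmap {M : Type} [AddCommMonoid M] [Module k M] (g : H → M)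
    (ha : ∀ x y, g (x + y) = g x + g y)
    (hs : ∀ (c : k) (x : H), g (c • x) = c • g x) : H →ₗ[k] M :=
  ⟨⟨g, fun x y => ha x y⟩, fun c x => hs c x⟩

@[simp] lemma lmap_apply {M : Type} [AddCommMonoid M] [Module k M] (g : H → M)
    (ha : ∀ x y, g (x + y) = g x + g y)
    (hs : ∀ (c : k) (x : H), g (c • x) = c • g x) (y : H) :
    lmap g ha hs y = g y := rfl

/-- Build a trilinear map from a function. -/
def mk₃ {M : Type} [AddCommMonoid M] [Module k M] (f : H → H → H → M)
    (h1 : ∀ y y' z w, f (y + y') z w = f y z w + f y' z w)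
    (h2 : ∀ (c : k) y z w, f (c • y) z w = c • f y z w)
    (h3 : ∀ y z z' w, f y (z + z') w = f y z w + f y z' w)
    (h4 : ∀ (c : k) y z w, f y (c • z) w = c • f y z w)
    (h5 : ∀ y z w w', f y z (w + w') = f y z w + f y z w')
    (h6 : ∀ (c : k) y z w, f y z (c • w) = c • f y z w) :
    H →ₗ[k] H →ₗ[k] H →ₗ[k] M where
  toFun y :=
    { toFun := fun z => ⟨⟨f y z, h5 y z⟩, fun c w => h6 c y z w⟩
      map_add' := fun z z' => LinearMap.ext fun w => h3 y z z' w
      map_smul' := fun c z => LinearMap.ext fun w => h4 c y z w }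
  map_add' y y' := LinearMap.ext fun z => LinearMap.ext fun w => h1 y y' z w
  map_smul' c y := LinearMap.ext fun z => LinearMap.ext fun w => h2 c y z w

@[simp] lemma mk₃_apply {M : Type} [AddCommMonoid M] [Module k M] (f : H → H → H → M)
    (h1 : ∀ y y' z w, f (y + y') z w = f y z w + f y' z w)
    (h2 : ∀ (c : k) y z w, f (c • y) z w = c • f y z w)
    (h3 : ∀ y z z' w, f y (z + z') w = f y z w + f y z' w)
    (h4 : ∀ (c : k) y z w, f y (c • z) w = c • f y z w)
    (h5 : ∀ y z w w', f y z (w + w') = f y z w + f y z w')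
    (h6 : ∀ (c : k) y z w, f y z (c • w) = c • f y z w) (y z w : H) :
    mk₃ f h1 h2 h3 h4 h5 h6 y z w = f y z w := rfl

/-- Every element of a tensor product is a `Fin`-indexed sum of pure tensors. -/
lemma exists_fin_dec (t : H ⊗[k] H) :
    ∃ (n : ℕ) (p q : Fin n → H), t = ∑ i, p i ⊗ₜ[k] q i := by
  obtain ⟨s, hs⟩ := TensorProduct.exists_finset t
  refine ⟨s.card, fun i => (s.equivFin.symm i : H × H).1,
    fun i => (s.equivFin.symm i : H × H).2, ?_⟩
  rw [hs, ← Finset.sum_coe_sort s (fun x => x.1 ⊗ₜ[k] x.2),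
    ← Equiv.sum_comp s.equivFin.symm (fun (x : s) => (x : H × H).1 ⊗ₜ[k] (x : H × H).2)]

lemma exists_dec (z : H) :
    ∃ (n : ℕ) (p q : Fin n → H), Coalgebra.comul (R := k) z = ∑ i, p i ⊗ₜ[k] q i :=
  exists_fin_dec _

lemma counit_smul_sum {M : Type} [AddCommMonoid M] [Module k M]
    (z : H) {n : ℕ} (p q : Fin n → H)
    (h : Coalgebra.comul (R := k) z = ∑ i, p i ⊗ₜ[k] q i) (f : H →ₗ[k] M) :
    ∑ i, Coalgebra.counit (R := k) (q i) • f (p i) = f z := by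
  have h2 : ∑ i, Coalgebra.counit (R := k) (q i) • p i = z := by
    have := congrArg (fun t => (TensorProduct.rid k H)
      ((Coalgebra.counit (R := k)).lTensor H t)) h
    simpa [map_sum, Coalgebra.lTensor_counit_comul] using this.symm
  calc ∑ i, Coalgebra.counit (R := k) (q i) • f (p i)
      = f (∑ i, Coalgebra.counit (R := k) (q i) • p i) := by
        rw [map_sum]; simp [map_smul]
    _ = f z := by rw [h2]

lemma antipode_sum_left (z : H) {n : ℕ} (p q : Fin n → H)
    (h : Coalgebra.comul (R := k) z = ∑ i, p i ⊗ₜ[k] q i) :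
    ∑ i, p i * antipode (R := k) (q i) = algebraMap k H (Coalgebra.counit (R := k) z) := by
  have := congrArg (fun t => LinearMap.mul' k H ((antipode (R := k)).lTensor H t)) h
  simpa [map_sum, LinearMap.mul'_apply,
    HopfAlgebra.mul_antipode_lTensor_comul_apply] using this.symm

lemma antipode_sum_right (z : H) {n : ℕ} (p q : Fin n → H)
    (h : Coalgebra.comul (R := k) z = ∑ i, p i ⊗ₜ[k] q i) :
    ∑ i, antipode (R := k) (p i) * q i = algebraMap k H (Coalgebra.counit (R := k) z) := by
  have := congrArg (fun t => LinearMap.mul' k H ((antipode (R := k)).rTensor H t)) h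
  simpa [map_sum, LinearMap.mul'_apply,
    HopfAlgebra.mul_antipode_rTensor_comul_apply] using this.symm

lemma coassoc_sum {M : Type} [AddCommMonoid M] [Module k M]
    (T : H →ₗ[k] H →ₗ[k] H →ₗ[k] M)
    (z : H) {n : ℕ} (z1 z2 : Fin n → H)
    (hz : Coalgebra.comul (R := k) z = ∑ i, z1 i ⊗ₜ[k] z2 i)
    {m1 : Fin n → ℕ} (p q : ∀ i, Fin (m1 i) → H)
    (hp : ∀ i, Coalgebra.comul (R := k) (z1 i) = ∑ l, p i l ⊗ₜ[k] q i l)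
    {m2 : Fin n → ℕ} (r s : ∀ i, Fin (m2 i) → H)
    (hr : ∀ i, Coalgebra.comul (R := k) (z2 i) = ∑ l, r i l ⊗ₜ[k] s i l) :
    ∑ i, ∑ l, T (p i l) (q i l) (z2 i) = ∑ i, ∑ l, T (z1 i) (r i l) (s i l) := by
  set T₃ : (H ⊗[k] H) ⊗[k] H →ₗ[k] M :=
    TensorProduct.lift (TensorProduct.lift T) with hT₃
  have e1 : ∑ i, ∑ l, T (p i l) (q i l) (z2 i)
      = T₃ ((Coalgebra.comul (R := k)).rTensor H (Coalgebra.comul (R := k) z)) := by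
    rw [hz, map_sum, map_sum]
    refine Finset.sum_congr rfl fun i _ => ?_
    rw [LinearMap.rTensor_tmul, hp i, TensorProduct.sum_tmul, map_sum]
    simp [hT₃]
  have e2 : ∑ i, ∑ l, T (z1 i) (r i l) (s i l)
      = T₃ ((TensorProduct.assoc k H H H).symm
          ((Coalgebra.comul (R := k)).lTensor H (Coalgebra.comul (R := k) z))) := by
    rw [hz, map_sum, map_sum, map_sum]
    refine Finset.sum_congr rfl fun i _ => ?_
    rw [LinearMap.lTensor_tmul, hr i, TensorProduct.tmul_sum, map_sum, map_sum]
    simp [hT₃, TensorProduct.assoc_symm_tmul]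
  rw [e1, e2, Coalgebra.coassoc_symm_apply]

section Conv

variable {C : Type} [Ring C] [Algebra k C]

/-- Convolution product of linear maps `H → C`. -/
noncomputable def conv (f g : H →ₗ[k] C) : H →ₗ[k] C :=
  LinearMap.mul' k C ∘ₗ TensorProduct.map f g ∘ₗ
    (CoalgebraStruct.comul (R := k) (A := H))

lemma conv_apply_dec (f g : H →ₗ[k] C) (z : H) {n : ℕ} (p q : Fin n → H)
    (h : Coalgebra.comul (R := k) z = ∑ i, p i ⊗ₜ[k] q i) :
    conv f g z = ∑ i, f (p i) * g (q i) := by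
  simp [conv, h, map_sum, LinearMap.mul'_apply]

/-- The convolution unit. -/
noncomputable def convUnit : H →ₗ[k] C :=
  Algebra.linearMap k C ∘ₗ (Coalgebra.counit (R := k) (A := H))

lemma convUnit_apply (z : H) :
    (convUnit : H →ₗ[k] C) z = algebraMap k C (Coalgebra.counit (R := k) z) := rfl

lemma conv_unit_left (f : H →ₗ[k] C) : conv convUnit f = f := by
  refine LinearMap.ext fun z => ?_
  obtain ⟨n, p, q, h⟩ := exists_dec (k := k) z
  rw [conv_apply_dec _ _ z p q h]
  have h2 : ∑ i, Coalgebra.counit (R := k) (p i) • q i = z := by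
    have := congrArg (fun t => (TensorProduct.lid k H)
      ((Coalgebra.counit (R := k)).rTensor H t)) h
    simpa [map_sum, Coalgebra.rTensor_counit_comul] using this.symm
  calc ∑ i, (convUnit : H →ₗ[k] C) (p i) * f (q i)
      = ∑ i, Coalgebra.counit (R := k) (p i) • f (q i) := by
        refine Finset.sum_congr rfl fun i _ => ?_
        rw [convUnit_apply, ← Algebra.smul_def]
    _ = f (∑ i, Coalgebra.counit (R := k) (p i) • q i) := by
        rw [map_sum]; simp [map_smul]
    _ = f z := by rw [h2]

lemma conv_unit_right (f : H →ₗ[k] C) : conv f convUnit = f := by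
  refine LinearMap.ext fun z => ?_
  obtain ⟨n, p, q, h⟩ := exists_dec (k := k) z
  rw [conv_apply_dec _ _ z p q h]
  calc ∑ i, f (p i) * (convUnit : H →ₗ[k] C) (q i)
      = ∑ i, Coalgebra.counit (R := k) (q i) • f (p i) := by
        refine Finset.sum_congr rfl fun i _ => ?_
        rw [convUnit_apply, ← Algebra.commutes, ← Algebra.smul_def]
    _ = f z := counit_smul_sum z p q h f

lemma conv_assoc (f g e : H →ₗ[k] C) : conv (conv f g) e = conv f (conv g e) := by
  refine LinearMap.ext fun z => ?_
  obtain ⟨n, z1, z2, hz⟩ := exists_dec (k := k) z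
  choose m1 p q hp using fun i => exists_dec (k := k) (z1 i)
  choose m2 r s hr using fun i => exists_dec (k := k) (z2 i)
  set T : H →ₗ[k] H →ₗ[k] H →ₗ[k] C :=
    mk₃ (fun y z w => (f y * g z) * e w)
      (by intro y y' z w; simp [map_add, map_smul, add_mul, mul_add, smul_mul_assoc, mul_smul_comm, TensorProduct.add_tmul, TensorProduct.tmul_add, TensorProduct.smul_tmul, TensorProduct.tmul_smul])
      (by intro c y z w; simp [map_add, map_smul, add_mul, mul_add, smul_mul_assoc, mul_smul_comm, TensorProduct.add_tmul, TensorProduct.tmul_add, TensorProduct.smul_tmul, TensorProduct.tmul_smul])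
      (by intro y z z' w; simp [map_add, map_smul, add_mul, mul_add, smul_mul_assoc, mul_smul_comm, TensorProduct.add_tmul, TensorProduct.tmul_add, TensorProduct.smul_tmul, TensorProduct.tmul_smul])
      (by intro c y z w; simp [map_add, map_smul, add_mul, mul_add, smul_mul_assoc, mul_smul_comm, TensorProduct.add_tmul, TensorProduct.tmul_add, TensorProduct.smul_tmul, TensorProduct.tmul_smul])
      (by intro y z w w'; simp [map_add, map_smul, add_mul, mul_add, smul_mul_assoc, mul_smul_comm, TensorProduct.add_tmul, TensorProduct.tmul_add, TensorProduct.smul_tmul, TensorProduct.tmul_smul])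
      (by intro c y z w; simp [map_add, map_smul, add_mul, mul_add, smul_mul_assoc, mul_smul_comm, TensorProduct.add_tmul, TensorProduct.tmul_add, TensorProduct.smul_tmul, TensorProduct.tmul_smul]) with hT
  calc conv (conv f g) e z = ∑ i, conv f g (z1 i) * e (z2 i) :=
        conv_apply_dec _ _ z z1 z2 hz
    _ = ∑ i, ∑ l, T (p i l) (q i l) (z2 i) := by
        refine Finset.sum_congr rfl fun i _ => ?_
        rw [conv_apply_dec _ _ _ (p i) (q i) (hp i), Finset.sum_mul]
        simp [hT]
    _ = ∑ i, ∑ l, T (z1 i) (r i l) (s i l) :=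
        coassoc_sum T z z1 z2 hz p q hp r s hr
    _ = ∑ i, f (z1 i) * conv g e (z2 i) := by
        refine Finset.sum_congr rfl fun i _ => ?_
        rw [conv_apply_dec _ _ _ (r i) (s i) (hr i), Finset.mul_sum]
        simp [hT, mul_assoc]
    _ = conv f (conv g e) z := (conv_apply_dec _ _ z z1 z2 hz).symm

end Conv

section DeltaS

/-- `Δ ∘ S`. -/
noncomputable def Fm : H →ₗ[k] H ⊗[k] H :=
  (CoalgebraStruct.comul (R := k) (A := H)) ∘ₗ antipode (R := k)

/-- `τ ∘ (S ⊗ S) ∘ Δ`. -/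
noncomputable def Km : H →ₗ[k] H ⊗[k] H :=
  (TensorProduct.comm k H H).toLinearMap ∘ₗ
    TensorProduct.map (antipode (R := k)) (antipode (R := k)) ∘ₗ
    (CoalgebraStruct.comul (R := k) (A := H))

lemma Fm_apply (z : H) : (Fm : H →ₗ[k] H ⊗[k] H) z
    = Coalgebra.comul (R := k) (antipode (R := k) z) := rfl

lemma Km_apply_dec (z : H) {n : ℕ} (p q : Fin n → H)
    (h : Coalgebra.comul (R := k) z = ∑ i, p i ⊗ₜ[k] q i) :
    (Km : H →ₗ[k] H ⊗[k] H) z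
      = ∑ i, antipode (R := k) (q i) ⊗ₜ[k] antipode (R := k) (p i) := by
  simp [Km, h, map_sum]

lemma conv_Fm_comul :
    conv (Fm : H →ₗ[k] H ⊗[k] H) (CoalgebraStruct.comul (R := k) (A := H)) = convUnit := by
  refine LinearMap.ext fun z => ?_
  obtain ⟨n, z1, z2, hz⟩ := exists_dec (k := k) z
  rw [conv_apply_dec _ _ z z1 z2 hz, convUnit_apply]
  calc ∑ i, (Fm : H →ₗ[k] H ⊗[k] H) (z1 i) * Coalgebra.comul (R := k) (z2 i)
      = ∑ i, Coalgebra.comul (R := k) (antipode (R := k) (z1 i) * z2 i) := by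
        refine Finset.sum_congr rfl fun i _ => ?_
        rw [Fm_apply, Bialgebra.comul_mul]
    _ = Coalgebra.comul (R := k) (∑ i, antipode (R := k) (z1 i) * z2 i) := by
        rw [map_sum]
    _ = algebraMap k (H ⊗[k] H) (Coalgebra.counit (R := k) z) := by
        rw [antipode_sum_right z z1 z2 hz, Bialgebra.comul_algebraMap]

lemma conv_comul_Km :
    conv (CoalgebraStruct.comul (R := k) (A := H)) (Km : H →ₗ[k] H ⊗[k] H) = convUnit := by
  refine LinearMap.ext fun z => ?_
  obtain ⟨n, z1, z2, hz⟩ := exists_dec (k := k) z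
  choose m1 p q hp using fun i => exists_dec (k := k) (z1 i)
  choose m2 r s hr using fun i => exists_dec (k := k) (z2 i)
  set T : H →ₗ[k] H →ₗ[k] H →ₗ[k] H ⊗[k] H :=
    mk₃ (fun y u w => Coalgebra.comul (R := k) y *
        (antipode (R := k) w ⊗ₜ[k] antipode (R := k) u))
      (by intro y y' u w; simp [map_add, map_smul, add_mul, mul_add, smul_mul_assoc, mul_smul_comm, TensorProduct.add_tmul, TensorProduct.tmul_add, TensorProduct.smul_tmul, TensorProduct.tmul_smul])
      (by intro c y u w; simp [map_add, map_smul, add_mul, mul_add, smul_mul_assoc, mul_smul_comm, TensorProduct.add_tmul, TensorProduct.tmul_add, TensorProduct.smul_tmul, TensorProduct.tmul_smul])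
      (by intro y u u' w; simp [map_add, map_smul, add_mul, mul_add, smul_mul_assoc, mul_smul_comm, TensorProduct.add_tmul, TensorProduct.tmul_add, TensorProduct.smul_tmul, TensorProduct.tmul_smul])
      (by intro c y u w; simp [map_add, map_smul, add_mul, mul_add, smul_mul_assoc, mul_smul_comm, TensorProduct.add_tmul, TensorProduct.tmul_add, TensorProduct.smul_tmul, TensorProduct.tmul_smul])
      (by intro y u w w'; simp [map_add, map_smul, add_mul, mul_add, smul_mul_assoc, mul_smul_comm, TensorProduct.add_tmul, TensorProduct.tmul_add, TensorProduct.smul_tmul, TensorProduct.tmul_smul])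
      (by intro c y u w; simp [map_add, map_smul, add_mul, mul_add, smul_mul_assoc, mul_smul_comm, TensorProduct.add_tmul, TensorProduct.tmul_add, TensorProduct.smul_tmul, TensorProduct.tmul_smul])
      with hT
  rw [conv_apply_dec _ _ z z1 z2 hz, convUnit_apply]
  calc ∑ i, Coalgebra.comul (R := k) (z1 i) * (Km : H →ₗ[k] H ⊗[k] H) (z2 i)
      = ∑ i, ∑ l, T (z1 i) (r i l) (s i l) := by
        refine Finset.sum_congr rfl fun i _ => ?_
        rw [Km_apply_dec _ (r i) (s i) (hr i), Finset.mul_sum]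
        simp [hT]
    _ = ∑ i, ∑ l, T (p i l) (q i l) (z2 i) :=
        (coassoc_sum T z z1 z2 hz p q hp r s hr).symm
    _ = ∑ i, (z1 i * antipode (R := k) (z2 i)) ⊗ₜ[k] (1 : H) := by
        refine Finset.sum_congr rfl fun i _ => ?_
        choose m3 c d hc using fun l => exists_dec (k := k) (p i l)
        choose m4 e f he using fun l => exists_dec (k := k) (q i l)
        set T' : H →ₗ[k] H →ₗ[k] H →ₗ[k] H ⊗[k] H :=
          mk₃ (fun u v w => (u * antipode (R := k) (z2 i)) ⊗ₜ[k]
              (v * antipode (R := k) w))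
            (by intro y y' u w; simp [map_add, map_smul, add_mul, mul_add, smul_mul_assoc, mul_smul_comm, TensorProduct.add_tmul, TensorProduct.tmul_add, TensorProduct.smul_tmul, TensorProduct.tmul_smul])
            (by intro cc y u w; simp [map_add, map_smul, add_mul, mul_add, smul_mul_assoc, mul_smul_comm, TensorProduct.add_tmul, TensorProduct.tmul_add, TensorProduct.smul_tmul, TensorProduct.tmul_smul])
            (by intro y u u' w; simp [map_add, map_smul, add_mul, mul_add, smul_mul_assoc, mul_smul_comm, TensorProduct.add_tmul, TensorProduct.tmul_add, TensorProduct.smul_tmul, TensorProduct.tmul_smul])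
            (by intro cc y u w; simp [map_add, map_smul, add_mul, mul_add, smul_mul_assoc, mul_smul_comm, TensorProduct.add_tmul, TensorProduct.tmul_add, TensorProduct.smul_tmul, TensorProduct.tmul_smul])
            (by intro y u w w'; simp [map_add, map_smul, add_mul, mul_add, smul_mul_assoc, mul_smul_comm, TensorProduct.add_tmul, TensorProduct.tmul_add, TensorProduct.smul_tmul, TensorProduct.tmul_smul])
            (by intro cc y u w; simp [map_add, map_smul, add_mul, mul_add, smul_mul_assoc, mul_smul_comm, TensorProduct.add_tmul, TensorProduct.tmul_add, TensorProduct.smul_tmul, TensorProduct.tmul_smul])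
            with hT'
        calc ∑ l, T (p i l) (q i l) (z2 i)
            = ∑ l, ∑ t, T' (c l t) (d l t) (q i l) := by
              refine Finset.sum_congr rfl fun l _ => ?_
              rw [hT]; rw [mk₃_apply, hc l, Finset.sum_mul]
              simp [hT', Algebra.TensorProduct.tmul_mul_tmul]
          _ = ∑ l, ∑ t, T' (p i l) (e l t) (f l t) :=
              coassoc_sum T' (z1 i) (p i) (q i) (hp i) c d hc e f he
          _ = ∑ l, Coalgebra.counit (R := k) (q i l) •
                ((p i l * antipode (R := k) (z2 i)) ⊗ₜ[k] (1 : H)) := by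
              refine Finset.sum_congr rfl fun l _ => ?_
              rw [hT']
              simp only [mk₃_apply]
              rw [← TensorProduct.tmul_sum, antipode_sum_left (q i l) (e l) (f l) (he l),
                Algebra.algebraMap_eq_smul_one, TensorProduct.tmul_smul]
          _ = (z1 i * antipode (R := k) (z2 i)) ⊗ₜ[k] (1 : H) := by
              exact counit_smul_sum (z1 i) (p i) (q i) (hp i)
                (lmap (fun y => (y * antipode (R := k) (z2 i)) ⊗ₜ[k] (1 : H))
                  (by intro a b; simp [map_add, map_smul, add_mul, mul_add, smul_mul_assoc, mul_smul_comm, TensorProduct.add_tmul, TensorProduct.tmul_add, TensorProduct.smul_tmul, TensorProduct.tmul_smul])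
                  (by intro cc a; simp [map_add, map_smul, add_mul, mul_add, smul_mul_assoc, mul_smul_comm, TensorProduct.add_tmul, TensorProduct.tmul_add, TensorProduct.smul_tmul, TensorProduct.tmul_smul]))
    _ = algebraMap k (H ⊗[k] H) (Coalgebra.counit (R := k) z) := by
        rw [← TensorProduct.sum_tmul, antipode_sum_left z z1 z2 hz,
          Algebra.TensorProduct.algebraMap_apply]

lemma Fm_eq_Km : (Fm : H →ₗ[k] H ⊗[k] H) = Km := by
  calc (Fm : H →ₗ[k] H ⊗[k] H)
      = conv Fm convUnit := (conv_unit_right _).symm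
    _ = conv Fm (conv (CoalgebraStruct.comul (R := k) (A := H)) Km) := by
        rw [conv_comul_Km]
    _ = conv (conv Fm (CoalgebraStruct.comul (R := k) (A := H))) Km :=
        (conv_assoc _ _ _).symm
    _ = conv convUnit Km := by rw [conv_Fm_comul]
    _ = Km := conv_unit_left _

/-- The antipode is an anti-coalgebra morphism, in decomposition form. -/
lemma comul_antipode_dec (z : H) {n : ℕ} (p q : Fin n → H)
    (h : Coalgebra.comul (R := k) z = ∑ i, p i ⊗ₜ[k] q i) :
    Coalgebra.comul (R := k) (antipode (R := k) z)
      = ∑ i, antipode (R := k) (q i) ⊗ₜ[k] antipode (R := k) (p i) := by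
  have := LinearMap.congr_fun (Fm_eq_Km (k := k) (H := H)) z
  rw [Fm_apply, Km_apply_dec z p q h] at this
  exact this

end DeltaS

lemma sum_finProd {M : Type} [AddCommMonoid M] {m n : ℕ} (F : Fin m → Fin n → M) :
    ∑ t : Fin (m * n), F (finProdFinEquiv.symm t).1 (finProdFinEquiv.symm t).2
      = ∑ j, ∑ l, F j l := by
  rw [Equiv.sum_comp (finProdFinEquiv.symm) (fun sjl : Fin m × Fin n => F sjl.1 sjl.2),
    Fintype.sum_prod_type]

lemma comul_mul_dec (u v : H) {m n : ℕ} (u1 u2 : Fin m → H) (v1 v2 : Fin n → H)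
    (hu : Coalgebra.comul (R := k) u = ∑ i, u1 i ⊗ₜ[k] u2 i)
    (hv : Coalgebra.comul (R := k) v = ∑ i, v1 i ⊗ₜ[k] v2 i) :
    Coalgebra.comul (R := k) (u * v)
      = ∑ t : Fin (m * n),
          (u1 (finProdFinEquiv.symm t).1 * v1 (finProdFinEquiv.symm t).2) ⊗ₜ[k]
          (u2 (finProdFinEquiv.symm t).1 * v2 (finProdFinEquiv.symm t).2) := by
  rw [Bialgebra.comul_mul, hu, hv, Finset.sum_mul_sum,
    sum_finProd (fun j l => (u1 j * v1 l) ⊗ₜ[k] (u2 j * v2 l))]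
  simp [Algebra.TensorProduct.tmul_mul_tmul]

section ActLemmas

variable {A : Type} [Ring A] [Algebra k A] (act : H →ₗ[k] Module.End k A)

/-- (D1) `z·a = ∑ (z₁·1)(z₂·a)`. -/
lemma lemD1 (pa1 : ∀ a : A, act 1 a = a)
    (pa3 : ∀ (h x : H) (a : A) (n : ℕ) (h1 h2 : Fin n → H),
      Coalgebra.comul (R := k) h = ∑ i, h1 i ⊗ₜ[k] h2 i →
      act h (act x a) = ∑ i, act (h1 i) 1 * act (h2 i * x) a)
    (z : H) (a : A) {n : ℕ} (p q : Fin n → H)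
    (h : Coalgebra.comul (R := k) z = ∑ i, p i ⊗ₜ[k] q i) :
    act z a = ∑ i, act (p i) 1 * act (q i) a := by
  have := pa3 z 1 a n p q h
  rw [pa1 a] at this
  simpa [mul_one] using this

/-- (D1') `z·a = ∑ (z₁·a)(z₂·1)`. -/
lemma lemD1' (pa1 : ∀ a : A, act 1 a = a)
    (pa4 : ∀ (h x : H) (a : A) (n : ℕ) (h1 h2 : Fin n → H),
      Coalgebra.comul (R := k) h = ∑ i, h1 i ⊗ₜ[k] h2 i →
      act h (act x a) = ∑ i, act (h1 i * x) a * act (h2 i) 1)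
    (z : H) (a : A) {n : ℕ} (p q : Fin n → H)
    (h : Coalgebra.comul (R := k) z = ∑ i, p i ⊗ₜ[k] q i) :
    act z a = ∑ i, act (p i) a * act (q i) 1 := by
  have := pa4 z 1 a n p q h
  rw [pa1 a] at this
  simpa [mul_one] using this

/-- (Lemma A) `∑ x₁·(S(x₂)·a) = (x·1)a`. -/
lemma lemA (pa1 : ∀ a : A, act 1 a = a)
    (pa3 : ∀ (h x : H) (a : A) (n : ℕ) (h1 h2 : Fin n → H),
      Coalgebra.comul (R := k) h = ∑ i, h1 i ⊗ₜ[k] h2 i →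
      act h (act x a) = ∑ i, act (h1 i) 1 * act (h2 i * x) a)
    (x : H) (a : A) {n : ℕ} (x1 x2 : Fin n → H)
    (hx : Coalgebra.comul (R := k) x = ∑ i, x1 i ⊗ₜ[k] x2 i) :
    ∑ i, act (x1 i) (act (antipode (R := k) (x2 i)) a) = act x 1 * a := by
  choose m1 p q hp using fun i => exists_dec (k := k) (x1 i)
  choose m2 r s hr using fun i => exists_dec (k := k) (x2 i)
  set T : H →ₗ[k] H →ₗ[k] H →ₗ[k] A :=
    mk₃ (fun y z w => act y 1 * act (z * antipode (R := k) w) a)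
      (by intros; simp [map_add, add_mul, LinearMap.add_apply])
      (by intros; simp [map_smul, smul_mul_assoc, LinearMap.smul_apply])
      (by intros; simp [map_add, add_mul, mul_add, LinearMap.add_apply])
      (by intros; simp [map_smul, smul_mul_assoc, mul_smul_comm, LinearMap.smul_apply])
      (by intros; simp [map_add, mul_add, LinearMap.add_apply])
      (by intros; simp [map_smul, mul_smul_comm, LinearMap.smul_apply]) with hT
  calc ∑ i, act (x1 i) (act (antipode (R := k) (x2 i)) a)
      = ∑ i, ∑ l, T (p i l) (q i l) (x2 i) := by
        refine Finset.sum_congr rfl fun i _ => ?_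
        rw [pa3 (x1 i) (antipode (R := k) (x2 i)) a (m1 i) (p i) (q i) (hp i)]
        simp [hT]
    _ = ∑ i, ∑ l, T (x1 i) (r i l) (s i l) :=
        coassoc_sum T x x1 x2 hx p q hp r s hr
    _ = ∑ i, Coalgebra.counit (R := k) (x2 i) • (act (x1 i) 1 * a) := by
        refine Finset.sum_congr rfl fun i _ => ?_
        calc ∑ l, T (x1 i) (r i l) (s i l)
            = act (x1 i) 1 * act (∑ l, r i l * antipode (R := k) (s i l)) a := by
              rw [map_sum, LinearMap.sum_apply, Finset.mul_sum]
              simp [hT]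
          _ = Coalgebra.counit (R := k) (x2 i) • (act (x1 i) 1 * a) := by
              rw [antipode_sum_left (x2 i) (r i) (s i) (hr i),
                Algebra.algebraMap_eq_smul_one, map_smul, LinearMap.smul_apply,
                pa1, mul_smul_comm]
    _ = act x 1 * a := by
        exact counit_smul_sum x x1 x2 hx
          (lmap (fun y => act y 1 * a)
            (by intros; simp [map_add, add_mul, LinearMap.add_apply])
            (by intros; simp [map_smul, smul_mul_assoc, LinearMap.smul_apply]))

/-- (Lemma B) `∑ S(x₁)·(x₂·a) = a(S(x)·1)`. -/
lemma lemB (pa1 : ∀ a : A, act 1 a = a)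
    (pa4 : ∀ (h x : H) (a : A) (n : ℕ) (h1 h2 : Fin n → H),
      Coalgebra.comul (R := k) h = ∑ i, h1 i ⊗ₜ[k] h2 i →
      act h (act x a) = ∑ i, act (h1 i * x) a * act (h2 i) 1)
    (x : H) (a : A) {n : ℕ} (x1 x2 : Fin n → H)
    (hx : Coalgebra.comul (R := k) x = ∑ i, x1 i ⊗ₜ[k] x2 i) :
    ∑ i, act (antipode (R := k) (x1 i)) (act (x2 i) a)
      = a * act (antipode (R := k) x) 1 := by
  choose m1 p q hp using fun i => exists_dec (k := k) (x1 i)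
  choose m2 r s hr using fun i => exists_dec (k := k) (x2 i)
  set T : H →ₗ[k] H →ₗ[k] H →ₗ[k] A :=
    mk₃ (fun y z w => act (antipode (R := k) z * w) a * act (antipode (R := k) y) 1)
      (by intros; simp [map_add, add_mul, mul_add, LinearMap.add_apply])
      (by intros; simp [map_smul, smul_mul_assoc, mul_smul_comm, LinearMap.smul_apply])
      (by intros; simp [map_add, add_mul, LinearMap.add_apply])
      (by intros; simp [map_smul, smul_mul_assoc, LinearMap.smul_apply])
      (by intros; simp [map_add, mul_add, add_mul, LinearMap.add_apply])
      (by intros; simp [map_smul, mul_smul_comm, smul_mul_assoc, LinearMap.smul_apply])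
      with hT
  calc ∑ i, act (antipode (R := k) (x1 i)) (act (x2 i) a)
      = ∑ i, ∑ l, T (p i l) (q i l) (x2 i) := by
        refine Finset.sum_congr rfl fun i _ => ?_
        rw [pa4 (antipode (R := k) (x1 i)) (x2 i) a (m1 i)
          (fun l => antipode (R := k) (q i l)) (fun l => antipode (R := k) (p i l))
          (comul_antipode_dec (x1 i) (p i) (q i) (hp i))]
        simp [hT]
    _ = ∑ i, ∑ l, T (x1 i) (r i l) (s i l) :=
        coassoc_sum T x x1 x2 hx p q hp r s hr
    _ = ∑ i, Coalgebra.counit (R := k) (x2 i) •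
          (a * act (antipode (R := k) (x1 i)) 1) := by
        refine Finset.sum_congr rfl fun i _ => ?_
        calc ∑ l, T (x1 i) (r i l) (s i l)
            = act (∑ l, antipode (R := k) (r i l) * s i l) a *
                act (antipode (R := k) (x1 i)) 1 := by
              rw [map_sum, LinearMap.sum_apply, Finset.sum_mul]
              simp [hT]
          _ = Coalgebra.counit (R := k) (x2 i) •
                (a * act (antipode (R := k) (x1 i)) 1) := by
              rw [antipode_sum_right (x2 i) (r i) (s i) (hr i),
                Algebra.algebraMap_eq_smul_one, map_smul, LinearMap.smul_apply,
                pa1, smul_mul_assoc]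
    _ = a * act (antipode (R := k) x) 1 := by
        exact counit_smul_sum x x1 x2 hx
          (lmap (fun y => a * act (antipode (R := k) y) 1)
            (by intros; simp [map_add, mul_add, LinearMap.add_apply])
            (by intros; simp [map_smul, mul_smul_comm, LinearMap.smul_apply]))

end ActLemmas

end PartialRepTools


set_option maxHeartbeats 1600000

open PartialRepTools in
/-- If `A` is a symmetric partial left `H`-module algebra, then
`π : H → End_k(A)`, `π(h)(a) = h·a`, is a partial representation of `H` on `End_k(A)`. -/
theorem partialAction_gives_partialRep {k : Type} [Field k] {H : Type} [Ring H]
    [HopfAlgebra k H] {A : Type} [Ring A] [Algebra k A]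
    (act : H →ₗ[k] Module.End k A) (hact : IsSymmetricPartialAction act) :
    IsPartialRep k act := by
  obtain ⟨pa1, pa2, pa3, pa4⟩ := hact
  refine ⟨?_, ?_, ?_, ?_, ?_⟩
  · -- (PR1)
    refine LinearMap.ext fun a => ?_
    simpa using pa1 a
  · -- (PR2)
    intro h x n x1 x2 hx
    refine LinearMap.ext fun a => ?_
    obtain ⟨nh, h1, h2, hh⟩ := exists_dec (k := k) h
    choose mh p q hp using fun j => exists_dec (k := k) (h1 j)
    choose mh2 r2 s2 hr2 using fun j => exists_dec (k := k) (h2 j)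
    choose mx px qx hpx using fun i => exists_dec (k := k) (x1 i)
    choose mx2 rx sx hrx using fun i => exists_dec (k := k) (x2 i)
    set T : H →ₗ[k] H →ₗ[k] H →ₗ[k] A :=
      mk₃ (fun y z w => (act (y * x) 1 * act z 1) * act w a)
        (by intros; simp [map_add, add_mul, LinearMap.add_apply])
        (by intros; simp [map_smul, smul_mul_assoc, LinearMap.smul_apply])
        (by intros; simp [map_add, add_mul, mul_add, LinearMap.add_apply])
        (by intros; simp [map_smul, smul_mul_assoc, mul_smul_comm, LinearMap.smul_apply])
        (by intros; simp [map_add, mul_add, LinearMap.add_apply])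
        (by intros; simp [map_smul, mul_smul_comm, LinearMap.smul_apply]) with hT
    have hL : (act h * ∑ i, act (x1 i) * act (antipode (R := k) (x2 i))) a
        = ∑ j, act (h1 j * x) 1 * act (h2 j) a := by
      calc (act h * ∑ i, act (x1 i) * act (antipode (R := k) (x2 i))) a
          = act h (∑ i, act (x1 i) (act (antipode (R := k) (x2 i)) a)) := by
            simp [Module.End.mul_apply, LinearMap.sum_apply]
        _ = act h (act x 1 * a) := by rw [lemA act pa1 pa3 x a x1 x2 hx]
        _ = ∑ j, act (h1 j) (act x 1) * act (h2 j) a := pa2 h (act x 1) a nh h1 h2 hh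
        _ = ∑ j, ∑ l, T (p j l) (q j l) (h2 j) := by
            refine Finset.sum_congr rfl fun j _ => ?_
            rw [pa4 (h1 j) x 1 (mh j) (p j) (q j) (hp j), Finset.sum_mul]
            simp [hT]
        _ = ∑ j, ∑ m, T (h1 j) (r2 j m) (s2 j m) :=
            coassoc_sum T h h1 h2 hh p q hp r2 s2 hr2
        _ = ∑ j, act (h1 j * x) 1 * act (h2 j) a := by
            refine Finset.sum_congr rfl fun j _ => ?_
            rw [lemD1 act pa1 pa3 (h2 j) a (r2 j) (s2 j) (hr2 j), Finset.mul_sum]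
            simp [hT, mul_assoc]
    have hR : (∑ i, act (h * x1 i) * act (antipode (R := k) (x2 i))) a
        = ∑ j, act (h1 j * x) 1 * act (h2 j) a := by
      calc (∑ i, act (h * x1 i) * act (antipode (R := k) (x2 i))) a
          = ∑ i, act (h * x1 i) (act (antipode (R := k) (x2 i)) a) := by
            simp [Module.End.mul_apply, LinearMap.sum_apply]
        _ = ∑ i, ∑ j, ∑ l, act (h1 j * px i l) 1 *
              act ((h2 j * qx i l) * antipode (R := k) (x2 i)) a := by
            refine Finset.sum_congr rfl fun i _ => ?_
            rw [pa3 (h * x1 i) (antipode (R := k) (x2 i)) a _ _ _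
              (comul_mul_dec h (x1 i) h1 h2 (px i) (qx i) hh (hpx i)),
              sum_finProd (fun j l => act (h1 j * px i l) 1 *
                act ((h2 j * qx i l) * antipode (R := k) (x2 i)) a)]
        _ = ∑ j, ∑ i, ∑ l, act (h1 j * px i l) 1 *
              act ((h2 j * qx i l) * antipode (R := k) (x2 i)) a := Finset.sum_comm
        _ = ∑ j, act (h1 j * x) 1 * act (h2 j) a := by
            refine Finset.sum_congr rfl fun j _ => ?_
            set Tj : H →ₗ[k] H →ₗ[k] H →ₗ[k] A :=
              mk₃ (fun y z w => act (h1 j * y) 1 *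
                  act ((h2 j * z) * antipode (R := k) w) a)
                (by intros; simp [map_add, mul_add, add_mul, LinearMap.add_apply])
                (by intros; simp [map_smul, mul_smul_comm, smul_mul_assoc, LinearMap.smul_apply])
                (by intros; simp [map_add, mul_add, add_mul, LinearMap.add_apply])
                (by intros; simp [map_smul, mul_smul_comm, smul_mul_assoc, LinearMap.smul_apply])
                (by intros; simp [map_add, mul_add, LinearMap.add_apply])
                (by intros; simp [map_smul, mul_smul_comm, LinearMap.smul_apply]) with hTj
            calc ∑ i, ∑ l, act (h1 j * px i l) 1 *
                  act ((h2 j * qx i l) * antipode (R := k) (x2 i)) a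
                = ∑ i, ∑ l, Tj (px i l) (qx i l) (x2 i) := by simp [hTj]
              _ = ∑ i, ∑ m, Tj (x1 i) (rx i m) (sx i m) :=
                  coassoc_sum Tj x x1 x2 hx px qx hpx rx sx hrx
              _ = ∑ i, Coalgebra.counit (R := k) (x2 i) •
                    (act (h1 j * x1 i) 1 * act (h2 j) a) := by
                  refine Finset.sum_congr rfl fun i _ => ?_
                  calc ∑ m, Tj (x1 i) (rx i m) (sx i m)
                      = act (h1 j * x1 i) 1 *
                          act (h2 j * ∑ m, rx i m * antipode (R := k) (sx i m)) a := by
                        rw [Finset.mul_sum, map_sum, LinearMap.sum_apply,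
                          Finset.mul_sum]
                        simp [hTj, mul_assoc]
                    _ = Coalgebra.counit (R := k) (x2 i) •
                          (act (h1 j * x1 i) 1 * act (h2 j) a) := by
                        rw [antipode_sum_left (x2 i) (rx i) (sx i) (hrx i),
                          Algebra.algebraMap_eq_smul_one, mul_smul_comm, mul_one,
                          map_smul, LinearMap.smul_apply, mul_smul_comm]
              _ = act (h1 j * x) 1 * act (h2 j) a := by
                  exact counit_smul_sum x x1 x2 hx
                    (lmap (fun y => act (h1 j * y) 1 * act (h2 j) a)
                      (by intros; simp [map_add, mul_add, add_mul, LinearMap.add_apply])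
                      (by intros; simp [map_smul, mul_smul_comm, smul_mul_assoc,
                        LinearMap.smul_apply]))
    rw [hL, hR]
  · -- (PR3)
    intro h x n h1 h2 hh
    refine LinearMap.ext fun a => ?_
    have hL : ((∑ i, act (h1 i) * act (antipode (R := k) (h2 i))) * act x) a
        = act h 1 * act x a := by
      calc ((∑ i, act (h1 i) * act (antipode (R := k) (h2 i))) * act x) a
          = ∑ i, act (h1 i) (act (antipode (R := k) (h2 i)) (act x a)) := by
            simp [Module.End.mul_apply, LinearMap.sum_apply]
        _ = act h 1 * act x a := lemA act pa1 pa3 h (act x a) h1 h2 hh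
    have hR : (∑ i, act (h1 i) * act (antipode (R := k) (h2 i) * x)) a
        = act h 1 * act x a := by
      choose m1 p q hp using fun i => exists_dec (k := k) (h1 i)
      choose m2 r s hr using fun i => exists_dec (k := k) (h2 i)
      set T : H →ₗ[k] H →ₗ[k] H →ₗ[k] A :=
        mk₃ (fun y z w => act y 1 * act (z * (antipode (R := k) w * x)) a)
          (by intros; simp [map_add, add_mul, LinearMap.add_apply])
          (by intros; simp [map_smul, smul_mul_assoc, LinearMap.smul_apply])
          (by intros; simp [map_add, add_mul, mul_add, LinearMap.add_apply])
          (by intros; simp [map_smul, smul_mul_assoc, mul_smul_comm, LinearMap.smul_apply])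
          (by intros; simp [map_add, add_mul, mul_add, LinearMap.add_apply])
          (by intros; simp [map_smul, smul_mul_assoc, mul_smul_comm, LinearMap.smul_apply])
          with hT
      calc (∑ i, act (h1 i) * act (antipode (R := k) (h2 i) * x)) a
          = ∑ i, act (h1 i) (act (antipode (R := k) (h2 i) * x) a) := by
            simp [Module.End.mul_apply, LinearMap.sum_apply]
        _ = ∑ i, ∑ l, T (p i l) (q i l) (h2 i) := by
            refine Finset.sum_congr rfl fun i _ => ?_
            rw [pa3 (h1 i) (antipode (R := k) (h2 i) * x) a (m1 i) (p i) (q i) (hp i)]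
            simp [hT, mul_assoc]
        _ = ∑ i, ∑ m, T (h1 i) (r i m) (s i m) :=
            coassoc_sum T h h1 h2 hh p q hp r s hr
        _ = ∑ i, Coalgebra.counit (R := k) (h2 i) • (act (h1 i) 1 * act x a) := by
            refine Finset.sum_congr rfl fun i _ => ?_
            calc ∑ m, T (h1 i) (r i m) (s i m)
                = act (h1 i) 1 *
                    act ((∑ m, r i m * antipode (R := k) (s i m)) * x) a := by
                  rw [Finset.sum_mul, map_sum, LinearMap.sum_apply, Finset.mul_sum]
                  simp [hT, mul_assoc]
              _ = Coalgebra.counit (R := k) (h2 i) • (act (h1 i) 1 * act x a) := by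
                  rw [antipode_sum_left (h2 i) (r i) (s i) (hr i),
                    Algebra.algebraMap_eq_smul_one, smul_mul_assoc, one_mul,
                    map_smul, LinearMap.smul_apply, mul_smul_comm]
        _ = act h 1 * act x a := by
            exact counit_smul_sum h h1 h2 hh
              (lmap (fun y => act y 1 * act x a)
                (by intros; simp [map_add, add_mul, LinearMap.add_apply])
                (by intros; simp [map_smul, smul_mul_assoc, LinearMap.smul_apply]))
    rw [hL, hR]
  · -- (PR4)
    intro h x n x1 x2 hx
    refine LinearMap.ext fun a => ?_
    obtain ⟨nh, h1, h2, hh⟩ := exists_dec (k := k) h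
    choose mh p q hp using fun j => exists_dec (k := k) (h1 j)
    choose mh2 r2 s2 hr2 using fun j => exists_dec (k := k) (h2 j)
    choose mx px qx hpx using fun i => exists_dec (k := k) (x1 i)
    choose mx2 rx sx hrx using fun i => exists_dec (k := k) (x2 i)
    set T : H →ₗ[k] H →ₗ[k] H →ₗ[k] A :=
      mk₃ (fun y z w => act y a * (act z 1 * act (w * antipode (R := k) x) 1))
        (by intros; simp [map_add, add_mul, LinearMap.add_apply])
        (by intros; simp [map_smul, smul_mul_assoc, LinearMap.smul_apply])
        (by intros; simp [map_add, add_mul, mul_add, LinearMap.add_apply])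
        (by intros; simp [map_smul, smul_mul_assoc, mul_smul_comm, LinearMap.smul_apply])
        (by intros; simp [map_add, add_mul, mul_add, LinearMap.add_apply])
        (by intros; simp [map_smul, smul_mul_assoc, mul_smul_comm, LinearMap.smul_apply])
        with hT
    have hL : (act h * ∑ i, act (antipode (R := k) (x1 i)) * act (x2 i)) a
        = ∑ j, act (h1 j) a * act (h2 j * antipode (R := k) x) 1 := by
      calc (act h * ∑ i, act (antipode (R := k) (x1 i)) * act (x2 i)) a
          = act h (∑ i, act (antipode (R := k) (x1 i)) (act (x2 i) a)) := by
            simp [Module.End.mul_apply, LinearMap.sum_apply]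
        _ = act h (a * act (antipode (R := k) x) 1) := by
            rw [lemB act pa1 pa4 x a x1 x2 hx]
        _ = ∑ j, act (h1 j) a * act (h2 j) (act (antipode (R := k) x) 1) :=
            pa2 h a (act (antipode (R := k) x) 1) nh h1 h2 hh
        _ = ∑ j, ∑ m, T (h1 j) (r2 j m) (s2 j m) := by
            refine Finset.sum_congr rfl fun j _ => ?_
            rw [pa3 (h2 j) (antipode (R := k) x) 1 (mh2 j) (r2 j) (s2 j) (hr2 j),
              Finset.mul_sum]
            simp [hT]
        _ = ∑ j, ∑ l, T (p j l) (q j l) (h2 j) :=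
            (coassoc_sum T h h1 h2 hh p q hp r2 s2 hr2).symm
        _ = ∑ j, act (h1 j) a * act (h2 j * antipode (R := k) x) 1 := by
            refine Finset.sum_congr rfl fun j _ => ?_
            rw [lemD1' act pa1 pa4 (h1 j) a (p j) (q j) (hp j), Finset.sum_mul]
            simp [hT, mul_assoc]
    have hR : (∑ i, act (h * antipode (R := k) (x1 i)) * act (x2 i)) a
        = ∑ j, act (h1 j) a * act (h2 j * antipode (R := k) x) 1 := by
      calc (∑ i, act (h * antipode (R := k) (x1 i)) * act (x2 i)) a
          = ∑ i, act (h * antipode (R := k) (x1 i)) (act (x2 i) a) := by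
            simp [Module.End.mul_apply, LinearMap.sum_apply]
        _ = ∑ i, ∑ j, ∑ l, act ((h1 j * antipode (R := k) (qx i l)) * x2 i) a *
              act (h2 j * antipode (R := k) (px i l)) 1 := by
            refine Finset.sum_congr rfl fun i _ => ?_
            rw [pa4 (h * antipode (R := k) (x1 i)) (x2 i) a _ _ _
              (comul_mul_dec h (antipode (R := k) (x1 i)) h1 h2
                (fun l => antipode (R := k) (qx i l))
                (fun l => antipode (R := k) (px i l)) hh
                (comul_antipode_dec (x1 i) (px i) (qx i) (hpx i))),
              sum_finProd (fun j l => act ((h1 j * antipode (R := k) (qx i l)) * x2 i) a *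
                act (h2 j * antipode (R := k) (px i l)) 1)]
        _ = ∑ j, ∑ i, ∑ l, act ((h1 j * antipode (R := k) (qx i l)) * x2 i) a *
              act (h2 j * antipode (R := k) (px i l)) 1 := Finset.sum_comm
        _ = ∑ j, act (h1 j) a * act (h2 j * antipode (R := k) x) 1 := by
            refine Finset.sum_congr rfl fun j _ => ?_
            set Tj : H →ₗ[k] H →ₗ[k] H →ₗ[k] A :=
              mk₃ (fun y z w => act ((h1 j * antipode (R := k) z) * w) a *
                  act (h2 j * antipode (R := k) y) 1)
                (by intros; simp [map_add, mul_add, add_mul, LinearMap.add_apply])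
                (by intros; simp [map_smul, mul_smul_comm, smul_mul_assoc, LinearMap.smul_apply])
                (by intros; simp [map_add, mul_add, add_mul, LinearMap.add_apply])
                (by intros; simp [map_smul, mul_smul_comm, smul_mul_assoc, LinearMap.smul_apply])
                (by intros; simp [map_add, mul_add, add_mul, LinearMap.add_apply])
                (by intros; simp [map_smul, mul_smul_comm, smul_mul_assoc, LinearMap.smul_apply])
                with hTj
            calc ∑ i, ∑ l, act ((h1 j * antipode (R := k) (qx i l)) * x2 i) a *
                  act (h2 j * antipode (R := k) (px i l)) 1
                = ∑ i, ∑ l, Tj (px i l) (qx i l) (x2 i) := by simp [hTj]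
              _ = ∑ i, ∑ m, Tj (x1 i) (rx i m) (sx i m) :=
                  coassoc_sum Tj x x1 x2 hx px qx hpx rx sx hrx
              _ = ∑ i, Coalgebra.counit (R := k) (x2 i) •
                    (act (h1 j) a * act (h2 j * antipode (R := k) (x1 i)) 1) := by
                  refine Finset.sum_congr rfl fun i _ => ?_
                  calc ∑ m, Tj (x1 i) (rx i m) (sx i m)
                      = act (h1 j * ∑ m, antipode (R := k) (rx i m) * sx i m) a *
                          act (h2 j * antipode (R := k) (x1 i)) 1 := by
                        rw [Finset.mul_sum, map_sum, LinearMap.sum_apply,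
                          Finset.sum_mul]
                        simp [hTj, mul_assoc]
                    _ = Coalgebra.counit (R := k) (x2 i) •
                          (act (h1 j) a * act (h2 j * antipode (R := k) (x1 i)) 1) := by
                        rw [antipode_sum_right (x2 i) (rx i) (sx i) (hrx i),
                          Algebra.algebraMap_eq_smul_one, mul_smul_comm, mul_one,
                          map_smul, LinearMap.smul_apply, smul_mul_assoc]
              _ = act (h1 j) a * act (h2 j * antipode (R := k) x) 1 := by
                  exact counit_smul_sum x x1 x2 hx
                    (lmap (fun y => act (h1 j) a * act (h2 j * antipode (R := k) y) 1)
                      (by intros; simp [map_add, mul_add, LinearMap.add_apply])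
                      (by intros; simp [map_smul, mul_smul_comm, LinearMap.smul_apply]))
    rw [hL, hR]
  · -- (PR5)
    intro h x n h1 h2 hh
    refine LinearMap.ext fun a => ?_
    have hL : ((∑ i, act (antipode (R := k) (h1 i)) * act (h2 i)) * act x) a
        = act x a * act (antipode (R := k) h) 1 := by
      calc ((∑ i, act (antipode (R := k) (h1 i)) * act (h2 i)) * act x) a
          = ∑ i, act (antipode (R := k) (h1 i)) (act (h2 i) (act x a)) := by
            simp [Module.End.mul_apply, LinearMap.sum_apply]
        _ = act x a * act (antipode (R := k) h) 1 :=
            lemB act pa1 pa4 h (act x a) h1 h2 hh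
    have hR : (∑ i, act (antipode (R := k) (h1 i)) * act (h2 i * x)) a
        = act x a * act (antipode (R := k) h) 1 := by
      choose m1 p q hp using fun i => exists_dec (k := k) (h1 i)
      choose m2 r s hr using fun i => exists_dec (k := k) (h2 i)
      set T : H →ₗ[k] H →ₗ[k] H →ₗ[k] A :=
        mk₃ (fun y z w => act (antipode (R := k) z * (w * x)) a *
            act (antipode (R := k) y) 1)
          (by intros; simp [map_add, mul_add, add_mul, LinearMap.add_apply])
          (by intros; simp [map_smul, mul_smul_comm, smul_mul_assoc, LinearMap.smul_apply])
          (by intros; simp [map_add, mul_add, add_mul, LinearMap.add_apply])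
          (by intros; simp [map_smul, mul_smul_comm, smul_mul_assoc, LinearMap.smul_apply])
          (by intros; simp [map_add, mul_add, add_mul, LinearMap.add_apply])
          (by intros; simp [map_smul, mul_smul_comm, smul_mul_assoc, LinearMap.smul_apply])
          with hT
      calc (∑ i, act (antipode (R := k) (h1 i)) * act (h2 i * x)) a
          = ∑ i, act (antipode (R := k) (h1 i)) (act (h2 i * x) a) := by
            simp [Module.End.mul_apply, LinearMap.sum_apply]
        _ = ∑ i, ∑ l, T (p i l) (q i l) (h2 i) := by
            refine Finset.sum_congr rfl fun i _ => ?_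
            rw [pa4 (antipode (R := k) (h1 i)) (h2 i * x) a (m1 i)
              (fun l => antipode (R := k) (q i l)) (fun l => antipode (R := k) (p i l))
              (comul_antipode_dec (h1 i) (p i) (q i) (hp i))]
            simp [hT]
        _ = ∑ i, ∑ m, T (h1 i) (r i m) (s i m) :=
            coassoc_sum T h h1 h2 hh p q hp r s hr
        _ = ∑ i, Coalgebra.counit (R := k) (h2 i) •
              (act x a * act (antipode (R := k) (h1 i)) 1) := by
            refine Finset.sum_congr rfl fun i _ => ?_
            calc ∑ m, T (h1 i) (r i m) (s i m)
                = act ((∑ m, antipode (R := k) (r i m) * s i m) * x) a *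
                    act (antipode (R := k) (h1 i)) 1 := by
                  rw [Finset.sum_mul, map_sum, LinearMap.sum_apply, Finset.sum_mul]
                  simp [hT, mul_assoc]
              _ = Coalgebra.counit (R := k) (h2 i) •
                    (act x a * act (antipode (R := k) (h1 i)) 1) := by
                  rw [antipode_sum_right (h2 i) (r i) (s i) (hr i),
                    Algebra.algebraMap_eq_smul_one, smul_mul_assoc, one_mul,
                    map_smul, LinearMap.smul_apply, smul_mul_assoc]
        _ = act x a * act (antipode (R := k) h) 1 := by
            exact counit_smul_sum h h1 h2 hh
              (lmap (fun y => act x a * act (antipode (R := k) y) 1)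
                (by intros; simp [map_add, mul_add, LinearMap.add_apply])
                (by intros; simp [map_smul, mul_smul_comm, LinearMap.smul_apply]))
    rw [hL, hR]
end
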